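/- Let S be a vertex cover of G of size k. Then there exists an optimal ordering φ for MSVC such that for every equivalence class A of the same-neighborhood relation on V(G)\S, the positions {φ(v) : v ∈ A} form a set of consecutive integers. -/

import Mathlib

open Finset

variable {V : Type*} [Fintype V] [DecidableEq V]

/-- MSVC cost of an ordering `φ` (positions are `(φ v : ℕ) + 1`, i.e. in `{1,…,n}`). -/
def msvcCost {n : ℕ} (G : SimpleGraph V) [DecidableRel G.Adj] (φ : V ≃ Fin n) : ℕ :=
  ∑ e ∈ G.edgeFinset,
    Sym2.lift ⟨fun u v => min ((φ u : ℕ) + 1) ((φ v : ℕ) + 1), fun _ _ => min_comm _ _⟩ e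

/-- Right degree of `v` in the ordering `φ`. -/
def rightDeg {n : ℕ} (G : SimpleGraph V) [DecidableRel G.Adj] (φ : V ≃ Fin n) (v : V) : ℕ :=
  ((G.neighborFinset v).filter fun u => φ v < φ u).card

lemma two_mul_msvcCost {n : ℕ} (G : SimpleGraph V) [DecidableRel G.Adj] (ψ : V ≃ Fin n) :
    2 * msvcCost G ψ
      = ∑ x : V, ∑ y ∈ G.neighborFinset x, min ((ψ x : ℕ) + 1) ((ψ y : ℕ) + 1) := by
  classical
  set f : V → V → ℕ := fun u v => min ((ψ u : ℕ) + 1) ((ψ v : ℕ) + 1) with hf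
  have hrhs : (∑ x : V, ∑ y ∈ G.neighborFinset x, f x y)
      = ∑ p ∈ (univ ×ˢ univ : Finset (V × V)).filter (fun p => G.Adj p.1 p.2), f p.1 p.2 := by
    rw [Finset.sum_filter, Finset.sum_product]
    refine Finset.sum_congr rfl fun x _ => ?_
    rw [SimpleGraph.neighborFinset_eq_filter, Finset.sum_filter]
  rw [hrhs]
  have hmaps : ∀ p ∈ (univ ×ˢ univ : Finset (V × V)).filter (fun p => G.Adj p.1 p.2),
      s(p.1, p.2) ∈ G.edgeFinset := by
    intro p hp
    simp only [mem_filter] at hp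
    simpa [SimpleGraph.mem_edgeFinset] using hp.2
  rw [← Finset.sum_fiberwise_of_maps_to hmaps]
  rw [msvcCost, Finset.mul_sum]
  refine Finset.sum_congr rfl fun e he => ?_
  induction e with
  | _ u v =>
    have hadj : G.Adj u v := by simpa [SimpleGraph.mem_edgeFinset] using he
    have hne : u ≠ v := G.ne_of_adj hadj
    have hfib : ((univ ×ˢ univ : Finset (V × V)).filter (fun p => G.Adj p.1 p.2)).filter
        (fun p => s(p.1, p.2) = s(u, v)) = {(u, v), (v, u)} := by
      ext p
      simp only [mem_filter, mem_univ, mem_product, true_and, mem_insert, mem_singleton,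
        Sym2.eq_iff]
      constructor
      · rintro ⟨_, (⟨h1, h2⟩ | ⟨h1, h2⟩)⟩
        · left; exact Prod.ext h1 h2
        · right; exact Prod.ext h1 h2
      · rintro (rfl | rfl)
        · exact ⟨hadj, Or.inl ⟨rfl, rfl⟩⟩
        · exact ⟨hadj.symm, Or.inr ⟨rfl, rfl⟩⟩
    rw [hfib]
    rw [Finset.sum_pair (by simp [hne])]
    simp only [Sym2.lift_mk]
    simp [f, min_comm, two_mul]

def sLf (p q t : ℕ) : ℕ := if t = q then p+1 else if p < t ∧ t < q then t+1 else t
def sRf (p q t : ℕ) : ℕ :=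
  if t = p then q else if t = q then q - 1 else if p < t ∧ t < q then t - 1 else t
def sLinv (p q s : ℕ) : ℕ := if s = p+1 then q else if p+1 < s ∧ s ≤ q then s - 1 else s
def sRinv (p q s : ℕ) : ℕ :=
  if s = q then p else if s = q - 1 then q else if p ≤ s ∧ s < q - 1 then s + 1 else s

lemma sLf_lt {n p q t : ℕ} (h : p + 2 ≤ q) (hq : q < n) (ht : t < n) : sLf p q t < n := by
  unfold sLf; split_ifs <;> omega
lemma sRf_lt {n p q t : ℕ} (h : p + 2 ≤ q) (hq : q < n) (ht : t < n) : sRf p q t < n := by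
  unfold sRf; split_ifs <;> omega
lemma sLinv_lt {n p q s : ℕ} (h : p + 2 ≤ q) (hq : q < n) (hs : s < n) : sLinv p q s < n := by
  unfold sLinv; split_ifs <;> omega
lemma sRinv_lt {n p q s : ℕ} (h : p + 2 ≤ q) (hq : q < n) (hs : s < n) : sRinv p q s < n := by
  unfold sRinv; split_ifs <;> omega

def eqvL (n p q : ℕ) (h : p + 2 ≤ q) (hq : q < n) : Fin n ≃ Fin n where
  toFun t := ⟨sLf p q t, sLf_lt h hq t.2⟩
  invFun s := ⟨sLinv p q s, sLinv_lt h hq s.2⟩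
  left_inv t := by
    ext
    show sLinv p q (sLf p q (t : ℕ)) = (t : ℕ)
    unfold sLf sLinv; split_ifs <;> omega
  right_inv s := by
    ext
    show sLf p q (sLinv p q (s : ℕ)) = (s : ℕ)
    unfold sLf sLinv; split_ifs <;> omega

def eqvR (n p q : ℕ) (h : p + 2 ≤ q) (hq : q < n) : Fin n ≃ Fin n where
  toFun t := ⟨sRf p q t, sRf_lt h hq t.2⟩
  invFun s := ⟨sRinv p q s, sRinv_lt h hq s.2⟩
  left_inv t := by
    ext
    show sRinv p q (sRf p q (t : ℕ)) = (t : ℕ)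
    unfold sRf sRinv; split_ifs <;> omega
  right_inv s := by
    ext
    show sRf p q (sRinv p q (s : ℕ)) = (s : ℕ)
    unfold sRf sRinv; split_ifs <;> omega

lemma cost_pt_other (p q g b : ℕ) (h : p + 2 ≤ q) (hg1 : g ≠ p) (hg2 : g ≠ q)
    (hb1 : b ≠ p) (hb2 : b ≠ q) :
    min (sLf p q g + 1) (sLf p q b + 1) + min (sRf p q g + 1) (sRf p q b + 1)
      = 2 * min (g + 1) (b + 1) := by
  unfold sLf sRf; split_ifs <;> omega

lemma cost_pt_pair (p q b : ℕ) (h : p + 2 ≤ q) (hb1 : b ≠ p) (hb2 : b ≠ q) :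
    (min (sLf p q p + 1) (sLf p q b + 1) + min (sLf p q q + 1) (sLf p q b + 1))
      + (min (sRf p q p + 1) (sRf p q b + 1) + min (sRf p q q + 1) (sRf p q b + 1))
      ≤ 2 * (min (p + 1) (b + 1) + min (q + 1) (b + 1)) := by
  unfold sLf sRf; split_ifs <;> omega

lemma cost_pt_pair' (p q g : ℕ) (h : p + 2 ≤ q) (hg1 : g ≠ p) (hg2 : g ≠ q) :
    (min (sLf p q g + 1) (sLf p q p + 1) + min (sLf p q g + 1) (sLf p q q + 1))
      + (min (sRf p q g + 1) (sRf p q p + 1) + min (sRf p q g + 1) (sRf p q q + 1))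
      ≤ 2 * (min (g + 1) (p + 1) + min (g + 1) (q + 1)) := by
  unfold sLf sRf; split_ifs <;> omega


omit [Fintype V] in
lemma sum_split2 {s : Finset V} (h : V → ℕ) {a b : V} (has : a ∈ s) (hbs : b ∈ s)
    (hab : a ≠ b) :
    ∑ x ∈ s, h x = h a + h b + ∑ x ∈ (s.erase a).erase b, h x := by
  rw [← Finset.add_sum_erase _ h has, ← Finset.add_sum_erase _ h
    (Finset.mem_erase.2 ⟨hab.symm, hbs⟩), add_assoc]

lemma cost_exchange {n : ℕ} (G : SimpleGraph V) [DecidableRel G.Adj]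
    (φ σL σR : V ≃ Fin n) {a b : V} {p q : ℕ}
    (hab : a ≠ b) (hnadj : ¬ G.Adj a b)
    (hN : G.neighborFinset a = G.neighborFinset b)
    (hpq : p + 2 ≤ q) (hpa : (φ a : ℕ) = p) (hqb : (φ b : ℕ) = q)
    (hL : ∀ x : V, (σL x : ℕ) = sLf p q (φ x : ℕ))
    (hR : ∀ x : V, (σR x : ℕ) = sRf p q (φ x : ℕ)) :
    2 * msvcCost G σL + 2 * msvcCost G σR ≤ 2 * (2 * msvcCost G φ) := by
  classical
  have hposne : ∀ {x y : V}, x ≠ y → (φ x : ℕ) ≠ (φ y : ℕ) := by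
    intro x y hxy hc
    exact hxy (φ.injective (Fin.val_injective hc))
  have hgp : ∀ {x : V}, x ≠ a → (φ x : ℕ) ≠ p := fun hx => hpa ▸ hposne hx
  have hgq : ∀ {x : V}, x ≠ b → (φ x : ℕ) ≠ q := fun hx => hqb ▸ hposne hx
  rw [two_mul_msvcCost, two_mul_msvcCost, two_mul_msvcCost]
  simp only [hL, hR]
  rw [sum_split2 (fun x => ∑ y ∈ G.neighborFinset x,
        min (sLf p q (φ x : ℕ) + 1) (sLf p q (φ y : ℕ) + 1)) (mem_univ a) (mem_univ b) hab,
     sum_split2 (fun x => ∑ y ∈ G.neighborFinset x,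
        min (sRf p q (φ x : ℕ) + 1) (sRf p q (φ y : ℕ) + 1)) (mem_univ a) (mem_univ b) hab,
     sum_split2 (fun x => ∑ y ∈ G.neighborFinset x,
        min ((φ x : ℕ) + 1) ((φ y : ℕ) + 1)) (mem_univ a) (mem_univ b) hab]
  simp only [hpa, hqb, ← hN]
  have hbNa : b ∉ G.neighborFinset a := by
    rw [SimpleGraph.mem_neighborFinset]; exact hnadj
  have hrowab :
      ((∑ y ∈ G.neighborFinset a, min (sLf p q p + 1) (sLf p q (φ y : ℕ) + 1))
        + (∑ y ∈ G.neighborFinset a, min (sLf p q q + 1) (sLf p q (φ y : ℕ) + 1)))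
      + ((∑ y ∈ G.neighborFinset a, min (sRf p q p + 1) (sRf p q (φ y : ℕ) + 1))
        + (∑ y ∈ G.neighborFinset a, min (sRf p q q + 1) (sRf p q (φ y : ℕ) + 1)))
      ≤ 2 * ((∑ y ∈ G.neighborFinset a, min (p + 1) ((φ y : ℕ) + 1))
        + (∑ y ∈ G.neighborFinset a, min (q + 1) ((φ y : ℕ) + 1))) := by
    rw [← Finset.sum_add_distrib, ← Finset.sum_add_distrib, ← Finset.sum_add_distrib,
      ← Finset.sum_add_distrib, Finset.mul_sum]
    refine Finset.sum_le_sum fun y hy => ?_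
    have hya : y ≠ a := by
      intro h; rw [h] at hy; exact SimpleGraph.notMem_neighborFinset_self G a hy
    have hyb : y ≠ b := by intro h; rw [h] at hy; exact hbNa hy
    exact cost_pt_pair p q (φ y : ℕ) hpq (hgp hya) (hgq hyb)
  have hrow : ∀ x ∈ (Finset.univ.erase a).erase b,
      (∑ y ∈ G.neighborFinset x, min (sLf p q (φ x : ℕ) + 1) (sLf p q (φ y : ℕ) + 1))
        + (∑ y ∈ G.neighborFinset x, min (sRf p q (φ x : ℕ) + 1) (sRf p q (φ y : ℕ) + 1))
      ≤ 2 * ∑ y ∈ G.neighborFinset x, min ((φ x : ℕ) + 1) ((φ y : ℕ) + 1) := by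
    intro x hx
    have hxb : x ≠ b := (Finset.mem_erase.1 hx).1
    have hxa : x ≠ a := (Finset.mem_erase.1 (Finset.mem_erase.1 hx).2).1
    by_cases haN : a ∈ G.neighborFinset x
    · have hbN : b ∈ G.neighborFinset x := by
        rw [SimpleGraph.mem_neighborFinset] at haN ⊢
        have h1 : x ∈ G.neighborFinset a := by
          rw [SimpleGraph.mem_neighborFinset]; exact haN.symm
        rw [hN, SimpleGraph.mem_neighborFinset] at h1
        exact h1.symm
      rw [sum_split2 (fun y => min (sLf p q (φ x : ℕ) + 1) (sLf p q (φ y : ℕ) + 1)) haN hbN hab,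
        sum_split2 (fun y => min (sRf p q (φ x : ℕ) + 1) (sRf p q (φ y : ℕ) + 1)) haN hbN hab,
        sum_split2 (fun y => min ((φ x : ℕ) + 1) ((φ y : ℕ) + 1)) haN hbN hab]
      simp only [hpa, hqb]
      have hrest :
          (∑ y ∈ ((G.neighborFinset x).erase a).erase b,
              min (sLf p q (φ x : ℕ) + 1) (sLf p q (φ y : ℕ) + 1))
            + (∑ y ∈ ((G.neighborFinset x).erase a).erase b,
              min (sRf p q (φ x : ℕ) + 1) (sRf p q (φ y : ℕ) + 1))
          = 2 * ∑ y ∈ ((G.neighborFinset x).erase a).erase b,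
              min ((φ x : ℕ) + 1) ((φ y : ℕ) + 1) := by
        rw [← Finset.sum_add_distrib, Finset.mul_sum]
        refine Finset.sum_congr rfl fun y hy => ?_
        have hyb : y ≠ b := (Finset.mem_erase.1 hy).1
        have hya : y ≠ a := (Finset.mem_erase.1 (Finset.mem_erase.1 hy).2).1
        exact cost_pt_other p q (φ x : ℕ) (φ y : ℕ) hpq (hgp hxa) (hgq hxb)
          (hgp hya) (hgq hyb)
      have hpair := cost_pt_pair' p q (φ x : ℕ) hpq (hgp hxa) (hgq hxb)
      omega
    · have hbN : b ∉ G.neighborFinset x := by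
        intro hbN
        apply haN
        rw [SimpleGraph.mem_neighborFinset] at hbN ⊢
        have h1 : x ∈ G.neighborFinset b := by
          rw [SimpleGraph.mem_neighborFinset]; exact hbN.symm
        rw [← hN, SimpleGraph.mem_neighborFinset] at h1
        exact h1.symm
      rw [← Finset.sum_add_distrib, Finset.mul_sum]
      refine le_of_eq (Finset.sum_congr rfl fun y hy => ?_)
      have hya : y ≠ a := by intro h; rw [h] at hy; exact haN hy
      have hyb : y ≠ b := by intro h; rw [h] at hy; exact hbN hy
      exact cost_pt_other p q (φ x : ℕ) (φ y : ℕ) hpq (hgp hxa) (hgq hxb)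
        (hgp hya) (hgq hyb)
  have hrestsum :
      (∑ x ∈ (Finset.univ.erase a).erase b, ∑ y ∈ G.neighborFinset x,
          min (sLf p q (φ x : ℕ) + 1) (sLf p q (φ y : ℕ) + 1))
        + (∑ x ∈ (Finset.univ.erase a).erase b, ∑ y ∈ G.neighborFinset x,
          min (sRf p q (φ x : ℕ) + 1) (sRf p q (φ y : ℕ) + 1))
      ≤ 2 * ∑ x ∈ (Finset.univ.erase a).erase b, ∑ y ∈ G.neighborFinset x,
          min ((φ x : ℕ) + 1) ((φ y : ℕ) + 1) := by
    rw [← Finset.sum_add_distrib, Finset.mul_sum]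
    exact Finset.sum_le_sum hrow
  omega


lemma eqvL_apply (n p q : ℕ) (h : p + 2 ≤ q) (hq : q < n) (t : Fin n) :
    ((eqvL n p q h hq t : Fin n) : ℕ) = sLf p q (t : ℕ) := rfl

lemma eqvR_apply (n p q : ℕ) (h : p + 2 ≤ q) (hq : q < n) (t : Fin n) :
    ((eqvR n p q h hq t : Fin n) : ℕ) = sRf p q (t : ℕ) := rfl

omit [Fintype V] in
lemma sum_split2' {s : Finset V} (h : V → ℕ) {a b : V} (has : a ∈ s) (hbs : b ∈ s)
    (hab : a ≠ b) :
    ∑ x ∈ s, h x = h a + h b + ∑ x ∈ (s.erase a).erase b, h x := by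
  rw [← Finset.add_sum_erase _ h has, ← Finset.add_sum_erase _ h
    (Finset.mem_erase.2 ⟨hab.symm, hbs⟩), add_assoc]

/-- the twin-pair spread measure -/
def mesM (G : SimpleGraph V) [DecidableRel G.Adj] (S : Finset V) {n : ℕ} (ψ : V ≃ Fin n) : ℕ :=
  ∑ x ∈ univ.filter (fun x => x ∉ S),
    ∑ y ∈ univ.filter (fun y => y ∉ S ∧ G.neighborFinset y = G.neighborFinset x ∧ y ≠ x),
      Nat.dist (ψ x : ℕ) (ψ y : ℕ)

lemma dist_pt_other (p q g b : ℕ) (h : p + 2 ≤ q) (hg1 : g ≠ p) (hg2 : g ≠ q)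
    (hb1 : b ≠ p) (hb2 : b ≠ q) :
    Nat.dist (sLf p q g) (sLf p q b) + Nat.dist (sRf p q g) (sRf p q b)
      = 2 * Nat.dist g b := by
  simp only [Nat.dist]; unfold sLf sRf; split_ifs <;> omega

lemma dist_pt_mateAB (p q g : ℕ) (h : p + 2 ≤ q) (hg : g < p ∨ q < g) :
    (Nat.dist (sLf p q p) (sLf p q g) + Nat.dist (sLf p q q) (sLf p q g))
      + (Nat.dist (sRf p q p) (sRf p q g) + Nat.dist (sRf p q q) (sRf p q g))
      = 2 * (Nat.dist p g + Nat.dist q g) := by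
  simp only [Nat.dist]; unfold sLf sRf; split_ifs <;> omega

lemma dist_pt_mateC (p q g : ℕ) (h : p + 2 ≤ q) (hg : g < p ∨ q < g) :
    (Nat.dist (sLf p q g) (sLf p q p) + Nat.dist (sLf p q g) (sLf p q q))
      + (Nat.dist (sRf p q g) (sRf p q p) + Nat.dist (sRf p q g) (sRf p q q))
      = 2 * (Nat.dist g p + Nat.dist g q) := by
  simp only [Nat.dist]; unfold sLf sRf; split_ifs <;> omega

lemma dist_pt_ab (p q : ℕ) (h : p + 2 ≤ q) :
    (Nat.dist (sLf p q p) (sLf p q q) + Nat.dist (sLf p q q) (sLf p q p))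
      + (Nat.dist (sRf p q p) (sRf p q q) + Nat.dist (sRf p q q) (sRf p q p)) + 4
      ≤ 2 * (Nat.dist p q + Nat.dist q p) := by
  simp only [Nat.dist]; unfold sLf sRf; split_ifs <;> omega

lemma measure_exchange {n : ℕ} (G : SimpleGraph V) [DecidableRel G.Adj] (S : Finset V)
    (φ σL σR : V ≃ Fin n) {a b : V} {p q : ℕ}
    (hab : a ≠ b) (haS : a ∉ S) (hbS : b ∉ S)
    (hN : G.neighborFinset a = G.neighborFinset b)
    (hpq : p + 2 ≤ q) (hpa : (φ a : ℕ) = p) (hqb : (φ b : ℕ) = q)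
    (hL : ∀ x : V, (σL x : ℕ) = sLf p q (φ x : ℕ))
    (hR : ∀ x : V, (σR x : ℕ) = sRf p q (φ x : ℕ))
    (hmates : ∀ c : V, c ∉ S → G.neighborFinset c = G.neighborFinset a → c ≠ a → c ≠ b →
      ((φ c : ℕ) < p ∨ q < (φ c : ℕ))) :
    mesM G S σL + mesM G S σR + 4 ≤ 2 * mesM G S φ := by
  classical
  have hposne : ∀ {x y : V}, x ≠ y → (φ x : ℕ) ≠ (φ y : ℕ) := by
    intro x y hxy hc
    exact hxy (φ.injective (Fin.val_injective hc))
  have hgp : ∀ {x : V}, x ≠ a → (φ x : ℕ) ≠ p := fun hx => hpa ▸ hposne hx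
  have hgq : ∀ {x : V}, x ≠ b → (φ x : ℕ) ≠ q := fun hx => hqb ▸ hposne hx
  unfold mesM
  simp only [hL, hR]
  have haI : a ∈ univ.filter (fun x : V => x ∉ S) := by simp [haS]
  have hbI : b ∈ univ.filter (fun x : V => x ∉ S) := by simp [hbS]
  rw [sum_split2' (fun x => ∑ y ∈ univ.filter
        (fun y => y ∉ S ∧ G.neighborFinset y = G.neighborFinset x ∧ y ≠ x),
        Nat.dist (sLf p q (φ x : ℕ)) (sLf p q (φ y : ℕ))) haI hbI hab,
      sum_split2' (fun x => ∑ y ∈ univ.filter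
        (fun y => y ∉ S ∧ G.neighborFinset y = G.neighborFinset x ∧ y ≠ x),
        Nat.dist (sRf p q (φ x : ℕ)) (sRf p q (φ y : ℕ))) haI hbI hab,
      sum_split2' (fun x => ∑ y ∈ univ.filter
        (fun y => y ∉ S ∧ G.neighborFinset y = G.neighborFinset x ∧ y ≠ x),
        Nat.dist ((φ x : ℕ)) ((φ y : ℕ))) haI hbI hab]
  simp only [hpa, hqb]
  -- index sets
  set clsa := univ.filter (fun y => y ∉ S ∧ G.neighborFinset y = G.neighborFinset a ∧ y ≠ a)
    with hclsa
  set clsb := univ.filter (fun y => y ∉ S ∧ G.neighborFinset y = G.neighborFinset b ∧ y ≠ b)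
    with hclsb
  have hbmem : b ∈ clsa := by
    rw [hclsa]; simp only [mem_filter, mem_univ, true_and]
    exact ⟨hbS, hN.symm, hab.symm⟩
  have hamem : a ∈ clsb := by
    rw [hclsb]; simp only [mem_filter, mem_univ, true_and]
    exact ⟨haS, hN, hab⟩
  have hC2 : clsa.erase b = clsb.erase a := by
    ext y
    simp only [hclsa, hclsb, mem_erase, mem_filter, mem_univ, true_and]
    constructor
    · rintro ⟨hyb, hyS, hyN, hya⟩
      exact ⟨hya, hyS, hyN.trans hN, hyb⟩
    · rintro ⟨hya, hyS, hyN, hyb⟩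
      exact ⟨hyb, hyS, hyN.trans hN.symm, hya⟩
  -- rows a and b, for a generic position map
  have hrowsplit : ∀ g : ℕ → ℕ,
      (∑ y ∈ clsa, Nat.dist (g p) (g (φ y : ℕ)))
        + (∑ y ∈ clsb, Nat.dist (g q) (g (φ y : ℕ)))
      = Nat.dist (g p) (g q) + Nat.dist (g q) (g p)
        + ∑ y ∈ clsa.erase b,
            (Nat.dist (g p) (g (φ y : ℕ)) + Nat.dist (g q) (g (φ y : ℕ))) := by
    intro g
    rw [← Finset.add_sum_erase _ _ hbmem, ← Finset.add_sum_erase _ _ hamem, hqb, hpa, ← hC2,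
      Finset.sum_add_distrib]
    ring
  rw [hrowsplit (sLf p q), hrowsplit (sRf p q)]
  have h3 := hrowsplit (fun t => t)
  rw [h3]
  -- the C2 sums
  have hC2fact : ∀ c ∈ clsa.erase b, ((φ c : ℕ) < p ∨ q < (φ c : ℕ)) := by
    intro c hc
    have hcb : c ≠ b := (Finset.mem_erase.1 hc).1
    have hc' := (Finset.mem_erase.1 hc).2
    rw [hclsa] at hc'
    simp only [mem_filter, mem_univ, true_and] at hc'
    exact hmates c hc'.1 hc'.2.1 hc'.2.2 hcb
  have hC2sum :
      (∑ y ∈ clsa.erase b,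
          (Nat.dist (sLf p q p) (sLf p q (φ y : ℕ)) + Nat.dist (sLf p q q) (sLf p q (φ y : ℕ))))
        + (∑ y ∈ clsa.erase b,
          (Nat.dist (sRf p q p) (sRf p q (φ y : ℕ)) + Nat.dist (sRf p q q) (sRf p q (φ y : ℕ))))
      = 2 * ∑ y ∈ clsa.erase b, (Nat.dist p (φ y : ℕ) + Nat.dist q (φ y : ℕ)) := by
    rw [← Finset.sum_add_distrib, Finset.mul_sum]
    exact Finset.sum_congr rfl fun y hy => dist_pt_mateAB p q (φ y : ℕ) hpq (hC2fact y hy)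
  have hABs := dist_pt_ab p q hpq
  -- remaining rows
  have hrow : ∀ x ∈ ((univ.filter (fun x : V => x ∉ S)).erase a).erase b,
      (∑ y ∈ univ.filter (fun y => y ∉ S ∧ G.neighborFinset y = G.neighborFinset x ∧ y ≠ x),
          Nat.dist (sLf p q (φ x : ℕ)) (sLf p q (φ y : ℕ)))
        + (∑ y ∈ univ.filter (fun y => y ∉ S ∧ G.neighborFinset y = G.neighborFinset x ∧ y ≠ x),
          Nat.dist (sRf p q (φ x : ℕ)) (sRf p q (φ y : ℕ)))
      ≤ 2 * ∑ y ∈ univ.filter (fun y => y ∉ S ∧ G.neighborFinset y = G.neighborFinset x ∧ y ≠ x),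
          Nat.dist ((φ x : ℕ)) ((φ y : ℕ)) := by
    intro x hx
    have hxb : x ≠ b := (Finset.mem_erase.1 hx).1
    have hxa : x ≠ a := (Finset.mem_erase.1 (Finset.mem_erase.1 hx).2).1
    have hxS : x ∉ S := by
      have := (Finset.mem_erase.1 (Finset.mem_erase.1 hx).2).2
      simpa using this
    by_cases hmate : G.neighborFinset x = G.neighborFinset a
    · have hamem' : a ∈ univ.filter
          (fun y => y ∉ S ∧ G.neighborFinset y = G.neighborFinset x ∧ y ≠ x) := by
        simp only [mem_filter, mem_univ, true_and]
        exact ⟨haS, hmate.symm, fun h => hxa h.symm⟩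
      have hbmem' : b ∈ univ.filter
          (fun y => y ∉ S ∧ G.neighborFinset y = G.neighborFinset x ∧ y ≠ x) := by
        simp only [mem_filter, mem_univ, true_and]
        exact ⟨hbS, hN.symm.trans hmate.symm, fun h => hxb h.symm⟩
      rw [sum_split2' (fun y => Nat.dist (sLf p q (φ x : ℕ)) (sLf p q (φ y : ℕ)))
            hamem' hbmem' hab,
          sum_split2' (fun y => Nat.dist (sRf p q (φ x : ℕ)) (sRf p q (φ y : ℕ)))
            hamem' hbmem' hab,
          sum_split2' (fun y => Nat.dist ((φ x : ℕ)) ((φ y : ℕ))) hamem' hbmem' hab]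
      simp only [hpa, hqb]
      have hγ : (φ x : ℕ) < p ∨ q < (φ x : ℕ) := hmates x hxS hmate hxa hxb
      have hpair := dist_pt_mateC p q (φ x : ℕ) hpq hγ
      have hrest :
          (∑ y ∈ ((univ.filter (fun y => y ∉ S ∧ G.neighborFinset y = G.neighborFinset x
                ∧ y ≠ x)).erase a).erase b,
              Nat.dist (sLf p q (φ x : ℕ)) (sLf p q (φ y : ℕ)))
            + (∑ y ∈ ((univ.filter (fun y => y ∉ S ∧ G.neighborFinset y = G.neighborFinset x
                ∧ y ≠ x)).erase a).erase b,
              Nat.dist (sRf p q (φ x : ℕ)) (sRf p q (φ y : ℕ)))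
          = 2 * ∑ y ∈ ((univ.filter (fun y => y ∉ S ∧ G.neighborFinset y = G.neighborFinset x
                ∧ y ≠ x)).erase a).erase b,
              Nat.dist ((φ x : ℕ)) ((φ y : ℕ)) := by
        rw [← Finset.sum_add_distrib, Finset.mul_sum]
        refine Finset.sum_congr rfl fun y hy => ?_
        have hyb : y ≠ b := (Finset.mem_erase.1 hy).1
        have hya : y ≠ a := (Finset.mem_erase.1 (Finset.mem_erase.1 hy).2).1
        exact dist_pt_other p q (φ x : ℕ) (φ y : ℕ) hpq (hgp hxa) (hgq hxb)
          (hgp hya) (hgq hyb)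
      omega
    · rw [← Finset.sum_add_distrib, Finset.mul_sum]
      refine le_of_eq (Finset.sum_congr rfl fun y hy => ?_)
      simp only [mem_filter, mem_univ, true_and] at hy
      have hya : y ≠ a := by
        intro h; rw [h] at hy; exact hmate (hy.2.1.symm)
      have hyb : y ≠ b := by
        intro h; rw [h] at hy; exact hmate ((hN.trans hy.2.1).symm)
      exact dist_pt_other p q (φ x : ℕ) (φ y : ℕ) hpq (hgp hxa) (hgq hxb)
        (hgp hya) (hgq hyb)
  have hrestsum :
      (∑ x ∈ ((univ.filter (fun x : V => x ∉ S)).erase a).erase b,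
          ∑ y ∈ univ.filter (fun y => y ∉ S ∧ G.neighborFinset y = G.neighborFinset x ∧ y ≠ x),
            Nat.dist (sLf p q (φ x : ℕ)) (sLf p q (φ y : ℕ)))
        + (∑ x ∈ ((univ.filter (fun x : V => x ∉ S)).erase a).erase b,
          ∑ y ∈ univ.filter (fun y => y ∉ S ∧ G.neighborFinset y = G.neighborFinset x ∧ y ≠ x),
            Nat.dist (sRf p q (φ x : ℕ)) (sRf p q (φ y : ℕ)))
      ≤ 2 * ∑ x ∈ ((univ.filter (fun x : V => x ∉ S)).erase a).erase b,
          ∑ y ∈ univ.filter (fun y => y ∉ S ∧ G.neighborFinset y = G.neighborFinset x ∧ y ≠ x),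
            Nat.dist ((φ x : ℕ)) ((φ y : ℕ)) := by
    rw [← Finset.sum_add_distrib, Finset.mul_sum]
    exact Finset.sum_le_sum hrow
  omega

lemma mesM_le {n : ℕ} (G : SimpleGraph V) [DecidableRel G.Adj] (S : Finset V)
    (hcard : Fintype.card V = n) (ψ : V ≃ Fin n) : mesM G S ψ ≤ n * n * n := by
  classical
  have hrow : ∀ x ∈ univ.filter (fun x : V => x ∉ S),
      (∑ y ∈ univ.filter (fun y => y ∉ S ∧ G.neighborFinset y = G.neighborFinset x ∧ y ≠ x),
        Nat.dist (ψ x : ℕ) (ψ y : ℕ)) ≤ n * n := by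
    intro x _
    calc (∑ y ∈ univ.filter (fun y => y ∉ S ∧ G.neighborFinset y = G.neighborFinset x ∧ y ≠ x),
          Nat.dist (ψ x : ℕ) (ψ y : ℕ))
        ≤ ∑ _y ∈ univ.filter (fun y => y ∉ S ∧ G.neighborFinset y = G.neighborFinset x ∧ y ≠ x),
          n := by
          refine Finset.sum_le_sum fun y _ => ?_
          have h1 : (ψ x : ℕ) < n := (ψ x).2
          have h2 : (ψ y : ℕ) < n := (ψ y).2
          simp only [Nat.dist]; omega
      _ = (univ.filter (fun y => y ∉ S ∧ G.neighborFinset y = G.neighborFinset x ∧ y ≠ x)).card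
            * n := by rw [Finset.sum_const, smul_eq_mul]
      _ ≤ n * n := by
          have := Finset.card_filter_le (univ : Finset V)
            (fun y => y ∉ S ∧ G.neighborFinset y = G.neighborFinset x ∧ y ≠ x)
          have h2 : (univ : Finset V).card = n := by rw [Finset.card_univ, hcard]
          exact Nat.mul_le_mul_right n (by omega)
  calc mesM G S ψ ≤ ∑ _x ∈ univ.filter (fun x : V => x ∉ S), n * n :=
        Finset.sum_le_sum hrow
    _ = (univ.filter (fun x : V => x ∉ S)).card * (n * n) := by
        rw [Finset.sum_const, smul_eq_mul]
    _ ≤ n * (n * n) := by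
        have := Finset.card_filter_le (univ : Finset V) (fun x : V => x ∉ S)
        have h2 : (univ : Finset V).card = n := by rw [Finset.card_univ, hcard]
        exact Nat.mul_le_mul_right (n*n) (by omega)
    _ = n * n * n := by ring

theorem stmt10 {n k : ℕ} (G : SimpleGraph V) [DecidableRel G.Adj]
    (hcard : Fintype.card V = n) (S : Finset V)
    (hS : ∀ a b : V, G.Adj a b → a ∈ S ∨ b ∈ S) (hSk : S.card = k) :
    ∃ φ : V ≃ Fin n, (∀ ψ : V ≃ Fin n, msvcCost G φ ≤ msvcCost G ψ) ∧
      ∀ u w z : V, u ∉ S → w ∉ S → G.neighborFinset u = G.neighborFinset w →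
        φ u < φ z → φ z < φ w →
        z ∉ S ∧ G.neighborFinset z = G.neighborFinset u := by
  classical
  set B : ℕ := n * n * n + 1 with hB
  set K : (V ≃ Fin n) → ℕ := fun ψ => B * (2 * msvcCost G ψ) + mesM G S ψ with hK
  have hne : (univ : Finset (V ≃ Fin n)).Nonempty :=
    ⟨Fintype.equivFinOfCardEq hcard, mem_univ _⟩
  obtain ⟨φ, -, hmin⟩ := Finset.exists_min_image (univ : Finset (V ≃ Fin n)) K hne
  have hmin' : ∀ ψ : V ≃ Fin n, K φ ≤ K ψ := fun ψ => hmin ψ (mem_univ ψ)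
  have hopt : ∀ ψ : V ≃ Fin n, msvcCost G φ ≤ msvcCost G ψ := by
    intro ψ
    by_contra hlt
    push_neg at hlt
    have h1 : K φ ≤ K ψ := hmin' ψ
    have h2 : mesM G S ψ ≤ n * n * n := mesM_le G S hcard ψ
    have h3 : 2 * msvcCost G ψ + 2 ≤ 2 * msvcCost G φ := by omega
    have h4 : B * (2 * msvcCost G ψ + 2) ≤ B * (2 * msvcCost G φ) :=
      Nat.mul_le_mul_left B h3
    rw [Nat.mul_add] at h4
    rw [hK] at h1
    simp only at h1
    omega
  refine ⟨φ, hopt, ?_⟩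
  intro u w z huS hwS hNuw huz hzw
  by_contra hcon
  -- the class of u and its positions
  set Pos : Finset (Fin n) :=
    (univ.filter (fun c => c ∉ S ∧ G.neighborFinset c = G.neighborFinset u)).image φ with hPos
  have humem : φ u ∈ Pos := by
    rw [hPos]; exact Finset.mem_image_of_mem φ (by simp [huS])
  have hwmem : φ w ∈ Pos := by
    rw [hPos]; exact Finset.mem_image_of_mem φ (by simp [hwS, hNuw])
  have hLne : (Pos.filter (· < φ z)).Nonempty := ⟨φ u, by simp [humem, huz]⟩
  have hGne : (Pos.filter (φ z < ·)).Nonempty := ⟨φ w, by simp [hwmem, hzw]⟩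
  set p' : Fin n := (Pos.filter (· < φ z)).max' hLne with hp'
  set q' : Fin n := (Pos.filter (φ z < ·)).min' hGne with hq'
  have hp'mem := (Pos.filter (· < φ z)).max'_mem hLne
  have hq'mem := (Pos.filter (φ z < ·)).min'_mem hGne
  rw [Finset.mem_filter] at hp'mem hq'mem
  obtain ⟨a, hamem, hap⟩ := Finset.mem_image.1 hp'mem.1
  obtain ⟨b, hbmem, hbq⟩ := Finset.mem_image.1 hq'mem.1
  rw [Finset.mem_filter] at hamem hbmem
  have haS : a ∉ S := hamem.2.1
  have hbS : b ∉ S := hbmem.2.1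
  have haN : G.neighborFinset a = G.neighborFinset u := hamem.2.2
  have hbN : G.neighborFinset b = G.neighborFinset u := hbmem.2.2
  have hp'z : p' < φ z := hp'mem.2
  have hzq' : φ z < q' := hq'mem.2
  set p : ℕ := (p' : ℕ) with hpdef
  set q : ℕ := (q' : ℕ) with hqdef
  have hpq : p + 2 ≤ q := by
    have h1 : (p' : ℕ) < (φ z : ℕ) := hp'z
    have h2 : ((φ z : ℕ)) < (q' : ℕ) := hzq'
    omega
  have hqn : q < n := q'.2
  have hpa : (φ a : ℕ) = p := by rw [hap]
  have hqb : (φ b : ℕ) = q := by rw [hbq]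
  have hab : a ≠ b := by
    intro h
    have hpq' : p = q := by rw [← hpa, ← hqb, h]
    omega
  have hnadj : ¬ G.Adj a b := by
    intro h
    rcases hS a b h with h' | h'
    · exact haS h'
    · exact hbS h'
  have hNab : G.neighborFinset a = G.neighborFinset b := haN.trans hbN.symm
  -- no classmate position strictly between p and q
  have hmates : ∀ c : V, c ∉ S → G.neighborFinset c = G.neighborFinset a → c ≠ a → c ≠ b →
      ((φ c : ℕ) < p ∨ q < (φ c : ℕ)) := by
    intro c hcS hcN hca hcb
    have hcmem : φ c ∈ Pos := by
      rw [hPos]; exact Finset.mem_image_of_mem φ (by simp [hcS, hcN.trans haN])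
    rcases lt_trichotomy (φ c) (φ z) with hlt | heq | hgt
    · left
      have hle : φ c ≤ p' := Finset.le_max' _ _ (by simp [hcmem, hlt])
      have hne : φ c ≠ p' := by
        intro h
        apply hca
        apply φ.injective
        rw [h]; exact hap.symm
      have : (φ c : ℕ) ≤ p := hle
      have : (φ c : ℕ) ≠ p := fun hcp => hne (Fin.val_injective (by rw [hcp]))
      omega
    · exfalso
      have : c = z := φ.injective heq
      rw [this] at hcS hcN
      exact hcon ⟨hcS, hcN.trans haN⟩
    · right
      have hle : q' ≤ φ c := Finset.min'_le _ _ (by simp [hcmem, hgt])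
      have hne : φ c ≠ q' := by
        intro h
        apply hcb
        apply φ.injective
        rw [h]; exact hbq.symm
      have h1 : q ≤ (φ c : ℕ) := hle
      have h2 : (φ c : ℕ) ≠ q := fun hcq => hne (Fin.val_injective (by rw [hcq]))
      omega
  -- construct the two exchanged orderings
  set σL : V ≃ Fin n := φ.trans (eqvL n p q hpq hqn) with hσL
  set σR : V ≃ Fin n := φ.trans (eqvR n p q hpq hqn) with hσR
  have hL : ∀ x : V, (σL x : ℕ) = sLf p q (φ x : ℕ) := fun x => eqvL_apply n p q hpq hqn (φ x)
  have hR : ∀ x : V, (σR x : ℕ) = sRf p q (φ x : ℕ) := fun x => eqvR_apply n p q hpq hqn (φ x)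
  have hcost := cost_exchange G φ σL σR hab hnadj hNab hpq hpa hqb hL hR
  have hmes := measure_exchange G S φ σL σR hab haS hbS hNab hpq hpa hqb hL hR hmates
  have k1 : K φ ≤ K σL := hmin' σL
  have k2 : K φ ≤ K σR := hmin' σR
  rw [hK] at k1 k2
  simp only at k1 k2
  have hmul : B * (2 * msvcCost G σL + 2 * msvcCost G σR) ≤ B * (2 * (2 * msvcCost G φ)) :=
    Nat.mul_le_mul_left B hcost
  rw [Nat.mul_add, show B * (2 * (2 * msvcCost G φ)) = 2 * (B * (2 * msvcCost G φ)) from by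
    ring] at hmul
  omega
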